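/- Let F be a finite field with an odd number of elements, and let a ∈ F with a ≠ 0. Then the sign of the permutation of F given by multiplication by a (the permutation Equiv.mulLeft₀ a) equals 1 if a is a square in F and −1 otherwise: Equiv.Perm.sign (Equiv.mulLeft₀ a ha) = if IsSquare a then 1 else −1. -/

import Mathlib

open Classical

private lemma mulLeft₀_pow_apply {F : Type*} [Field F] (a : F) (ha : a ≠ 0) (n : ℕ) (x : F) :
    ((Equiv.mulLeft₀ a ha) ^ n) x = a ^ n * x := by
  induction n with
  | zero => simp
  | succ n ih => rw [pow_succ', Equiv.Perm.mul_apply, ih]; simp [pow_succ']; ring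

private def mulSignHom (F : Type*) [Field F] [Fintype F] [DecidableEq F] : Fˣ →* ℤˣ where
  toFun u := Equiv.Perm.sign (Equiv.mulLeft₀ (u : F) u.ne_zero)
  map_one' := by
    have h : Equiv.mulLeft₀ ((1 : Fˣ) : F) (1 : Fˣ).ne_zero = 1 := by ext x; simp
    rw [h, map_one]
  map_mul' u v := by
    have : Equiv.mulLeft₀ ((u * v : Fˣ) : F) (u * v).ne_zero =
        Equiv.mulLeft₀ (u : F) u.ne_zero * Equiv.mulLeft₀ (v : F) v.ne_zero := by
      ext x; simp [mul_assoc]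
    rw [this, map_mul]

private lemma mulSignHom_gen {F : Type*} [Field F] [Fintype F] [DecidableEq F]
    (hodd : Odd (Fintype.card F)) (g : Fˣ) (hg : ∀ x : Fˣ, x ∈ Subgroup.zpowers g) :
    mulSignHom F g = -1 := by
  have hcardu : Fintype.card Fˣ = Fintype.card F - 1 := Fintype.card_units (α := F)
  have h2 : 1 < Fintype.card F := Fintype.one_lt_card
  have hg1 : (g : F) ≠ 1 := by
    intro h
    have h1 : g = 1 := Units.ext h
    have horder : orderOf g = Fintype.card Fˣ := by
      rw [orderOf_eq_card_of_forall_mem_zpowers hg, Nat.card_eq_fintype_card]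
    rw [h1, orderOf_one] at horder
    obtain ⟨m, hm⟩ := hodd
    omega
  set σ := Equiv.mulLeft₀ (g : F) g.ne_zero with hσ
  have hfix : ∀ x : F, σ x = x ↔ x = 0 := by
    intro x
    constructor
    · intro h
      simp only [hσ, Equiv.mulLeft₀_apply] at h
      by_contra hx
      exact hg1 (mul_right_cancel₀ hx (by rw [h, one_mul]))
    · intro h; simp [hσ, h]
  have hcycle : σ.IsCycle := by
    refine ⟨1, ?_, ?_⟩
    · simp [hσ, hg1]
    · intro y hy
      have hy0 : y ≠ 0 := fun h => hy ((hfix y).mpr h)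
      obtain ⟨k, hk⟩ := (mem_powers_iff_mem_zpowers).mpr (hg (Units.mk0 y hy0))
      have hk' : g ^ k = Units.mk0 y hy0 := hk
      refine ⟨(k : ℤ), ?_⟩
      rw [zpow_natCast]
      have h3 := mulLeft₀_pow_apply (g : F) g.ne_zero k 1
      rw [← hσ] at h3
      rw [h3, mul_one]
      have := congrArg Units.val hk'
      simpa using this
  have hsupp : σ.support = Finset.univ.filter (fun x => x ≠ 0) := by
    ext x
    simp [Equiv.Perm.mem_support, hfix x]
  have hsuppcard : σ.support.card = Fintype.card F - 1 := by
    rw [hsupp, Finset.filter_ne', Finset.card_erase_of_mem (Finset.mem_univ 0), Finset.card_univ]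
  have hs := hcycle.sign
  rw [hsuppcard] at hs
  have heven : Even (Fintype.card F - 1) := by
    obtain ⟨m, hm⟩ := hodd
    exact ⟨m, by omega⟩
  rw [Even.neg_one_pow heven] at hs
  simpa [mulSignHom, hσ] using hs

theorem sign_mulLeft_eq_quadratic_residue (F : Type*) [Field F] [Fintype F]
    [DecidableEq F] (hodd : Odd (Fintype.card F)) (a : F) (ha : a ≠ 0) :
    Equiv.Perm.sign (Equiv.mulLeft₀ a ha) = if IsSquare a then 1 else -1 := by
  have hchar : ringChar F ≠ 2 := by
    intro h
    have := FiniteField.even_card_of_char_two h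
    obtain ⟨m, hm⟩ := hodd
    omega
  obtain ⟨g, hg⟩ := IsCyclic.exists_generator (α := Fˣ)
  set u := Units.mk0 a ha with hu
  obtain ⟨k, hk⟩ := (mem_powers_iff_mem_zpowers).mpr (hg u)
  have hk' : g ^ k = u := hk
  have hval : Equiv.Perm.sign (Equiv.mulLeft₀ a ha) = mulSignHom F u := rfl
  have h2 : 1 < Fintype.card F := Fintype.one_lt_card
  have hpos : 0 < Fintype.card F / 2 := by
    obtain ⟨m, hm⟩ := hodd; omega
  have hsq : IsSquare a ↔ Even k := by
    rw [FiniteField.isSquare_iff hchar ha]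
    have hau : a = (u : F) := rfl
    have h1 : a ^ (Fintype.card F / 2) = ((g ^ (k * (Fintype.card F / 2)) : Fˣ) : F) := by
      rw [hau, ← hk']
      push_cast
      rw [← pow_mul]
    have horder : orderOf g = Fintype.card F - 1 := by
      rw [orderOf_eq_card_of_forall_mem_zpowers hg, Nat.card_eq_fintype_card,
        Fintype.card_units (α := F)]
    rw [h1, Units.val_eq_one, ← orderOf_dvd_iff_pow_eq_one, horder]
    have hhalf : Fintype.card F - 1 = (Fintype.card F / 2) * 2 := by
      obtain ⟨m, hm⟩ := hodd; omega
    rw [hhalf, mul_comm k (Fintype.card F / 2), Nat.mul_dvd_mul_iff_left hpos]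
    exact (even_iff_two_dvd).symm
  rw [hval, ← hk', map_pow, mulSignHom_gen hodd g hg]
  by_cases hke : Even k
  · rw [if_pos (hsq.mpr hke), Even.neg_one_pow hke]
  · rw [if_neg (fun h => hke (hsq.mp h)), Odd.neg_one_pow (Nat.not_even_iff_odd.mp hke)]
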